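/- For every a ≥ 4 divisible by 4 and every odd b ≥ 3, the cyclic Ramsey number of the nested matching of order a versus a star of order b satisfies R_cyc(M_a^nest, S_b) ≥ a + b − 3. -/

import Mathlib

open SimpleGraph Finset

/-- A symmetric `k`-edge-coloring `χ` of the complete graph on `Fin n` contains a copy of `H`
in color `j` via a strictly increasing embedding. -/
def ContainsOrd {m n k : ℕ} (H : SimpleGraph (Fin m))
    (χ : Fin n → Fin n → Fin k) (j : Fin k) : Prop :=
  ∃ φ : Fin m → Fin n, StrictMono φ ∧ ∀ u v : Fin m, H.Adj u v → χ (φ u) (φ v) = j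

/-- Contains a copy via an embedding that is increasing up to a cyclic permutation. -/
def ContainsCyc {m n k : ℕ} (H : SimpleGraph (Fin m))
    (χ : Fin n → Fin n → Fin k) (j : Fin k) : Prop :=
  ∃ φ : Fin m → Fin n, (∃ t : Fin m, StrictMono fun i : Fin m => φ (i + t)) ∧
    ∀ u v : Fin m, H.Adj u v → χ (φ u) (φ v) = j

/-- Contains a copy via an arbitrary injective embedding. -/
def ContainsStd {m n k : ℕ} (H : SimpleGraph (Fin m))
    (χ : Fin n → Fin n → Fin k) (j : Fin k) : Prop :=
  ∃ φ : Fin m → Fin n, Function.Injective φ ∧ ∀ u v : Fin m, H.Adj u v → χ (φ u) (φ v) = j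

/-- The ordered Ramsey number of a family of graphs. -/
noncomputable def Rord {k : ℕ} (m : Fin k → ℕ) (H : ∀ j, SimpleGraph (Fin (m j))) : ℕ :=
  sInf {n | ∀ χ : Fin n → Fin n → Fin k, (∀ u v, χ u v = χ v u) → ∃ j, ContainsOrd (H j) χ j}

/-- The cyclic Ramsey number of a family of graphs. -/
noncomputable def Rcyc {k : ℕ} (m : Fin k → ℕ) (H : ∀ j, SimpleGraph (Fin (m j))) : ℕ :=
  sInf {n | ∀ χ : Fin n → Fin n → Fin k, (∀ u v, χ u v = χ v u) → ∃ j, ContainsCyc (H j) χ j}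

/-- The standard Ramsey number of a family of graphs. -/
noncomputable def Rstd {k : ℕ} (m : Fin k → ℕ) (H : ∀ j, SimpleGraph (Fin (m j))) : ℕ :=
  sInf {n | ∀ χ : Fin n → Fin n → Fin k, (∀ u v, χ u v = χ v u) → ∃ j, ContainsStd (H j) χ j}

/-- The two-color ordered Ramsey number. -/
noncomputable def Rord2 {a b : ℕ} (H₁ : SimpleGraph (Fin a)) (H₂ : SimpleGraph (Fin b)) : ℕ :=
  sInf {n | ∀ χ : Fin n → Fin n → Fin 2, (∀ u v, χ u v = χ v u) →
    ContainsOrd H₁ χ 0 ∨ ContainsOrd H₂ χ 1}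

/-- The two-color cyclic Ramsey number. -/
noncomputable def Rcyc2 {a b : ℕ} (H₁ : SimpleGraph (Fin a)) (H₂ : SimpleGraph (Fin b)) : ℕ :=
  sInf {n | ∀ χ : Fin n → Fin n → Fin 2, (∀ u v, χ u v = χ v u) →
    ContainsCyc H₁ χ 0 ∨ ContainsCyc H₂ χ 1}

/-- The monotone path of order `n`. -/
def monPath (n : ℕ) : SimpleGraph (Fin n) :=
  SimpleGraph.fromRel fun u v => (u : ℕ) + 1 = (v : ℕ)

/-- The monotone cycle of order `n`. -/
def monCycle (n : ℕ) : SimpleGraph (Fin n) :=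
  SimpleGraph.fromRel fun u v => (u : ℕ) + 1 = (v : ℕ) ∨ ((u : ℕ) = 0 ∧ (v : ℕ) = n - 1)

/-- The start-central star of order `n` (center `0`). -/
def starSC (n : ℕ) : SimpleGraph (Fin n) :=
  SimpleGraph.fromRel fun u _ => (u : ℕ) = 0

/-- The star of order `n` with center `c`. -/
def starG (n : ℕ) (c : Fin n) : SimpleGraph (Fin n) :=
  SimpleGraph.fromRel fun u _ => u = c

/-- The nested matching of order `n`. -/
def nestedMatching (n : ℕ) : SimpleGraph (Fin n) :=
  SimpleGraph.fromRel fun u v => (u : ℕ) + (v : ℕ) = n - 1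

/-- Rotational isomorphism of two graphs on `Fin m`. -/
def RotIso {m : ℕ} (G₁ G₂ : SimpleGraph (Fin m)) : Prop :=
  ∃ s : Fin m, ∀ u v : Fin m, G₁.Adj u v ↔ G₂.Adj (u + s) (v + s)


lemma fin2_eq_zero (z : Fin 2) (h : z ≠ 1) : z = 0 := by fin_cases z <;> simp_all

lemma greedy (N b : ℕ) (hb : 3 ≤ b) (hN : 0 < N) (χ : Fin N → Fin N → Fin 2)
    (hdeg : ∀ x : Fin N, (univ.filter fun v => v ≠ x ∧ χ x v = 1).card ≤ b - 2) :
    ∀ k lo hi, hi < N → lo + k * b ≤ hi + 1 →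
    ∃ f : ℕ → Fin N, (∀ i, i < 2*k → lo ≤ (f i).val ∧ (f i).val ≤ hi) ∧
      (∀ i j, i < j → j < 2*k → (f i).val < (f j).val) ∧
      (∀ i, i < k → χ (f i) (f (2*k-1-i)) = 0) := by
  intro k
  induction k with
  | zero =>
    intro lo hi _ _
    exact ⟨fun _ => ⟨0, hN⟩, by omega, by omega, by omega⟩
  | succ k ih =>
    intro lo hi hhi hlen
    rw [add_mul, one_mul] at hlen
    have hlo : lo < N := by omega
    have htop : hi - (b-2) < N := by omega
    obtain ⟨y, hyU, hxy⟩ :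
        ∃ y : Fin N, (hi - (b-2) ≤ y.val ∧ y.val ≤ hi) ∧ χ ⟨lo, hlo⟩ y = 0 := by
      by_contra hno
      push_neg at hno
      have hsub : Finset.Icc (⟨hi - (b-2), htop⟩ : Fin N) ⟨hi, hhi⟩ ⊆
          univ.filter fun v => v ≠ ⟨lo, hlo⟩ ∧ χ ⟨lo, hlo⟩ v = 1 := by
        intro v hv
        rw [Finset.mem_Icc, Fin.le_def, Fin.le_def] at hv
        simp only [Fin.val_mk] at hv
        simp only [mem_filter, mem_univ, true_and]
        have hvlo : lo < v.val := by omega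
        refine ⟨Fin.ne_of_val_ne (by simpa using hvlo.ne'), ?_⟩
        by_contra h1
        exact hno v ⟨hv.1, hv.2⟩ (fin2_eq_zero _ h1)
      have h1 := Finset.card_le_card hsub
      rw [Fin.card_Icc] at h1
      simp only [Fin.val_mk] at h1
      have h2 := hdeg ⟨lo, hlo⟩
      omega
    have hy1 : lo + k * b + 1 ≤ y.val := by omega
    obtain ⟨f', hf'r, hf'm, hf'c⟩ := ih (lo+1) (y.val - 1) (by omega) (by omega)
    set g : ℕ → Fin N := fun i => if i = 0 then ⟨lo, hlo⟩ else if i = 2*k+1 then y else f' (i-1) with hg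
    have hg0 : g 0 = ⟨lo, hlo⟩ := by simp [hg]
    have hgl : g (2*k+1) = y := by simp [hg]
    have hgm : ∀ i, i ≠ 0 → i ≠ 2*k+1 → g i = f' (i-1) := by
      intro i h1 h2; rw [hg]; simp only [if_neg h1, if_neg h2]
    have h21 : 2*(k+1)-1 = 2*k+1 := by omega
    refine ⟨g, ?_, ?_, ?_⟩
    · intro i hi2
      by_cases h0 : i = 0
      · subst h0; rw [hg0]; simp only [Fin.val_mk]; omega
      · by_cases hl : i = 2*k+1
        · subst hl; rw [hgl]; omega
        · rw [hgm i h0 hl]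
          have := hf'r (i-1) (by omega)
          omega
    · intro i j hij hj2
      by_cases hi0 : i = 0
      · subst hi0; rw [hg0]
        by_cases hjl : j = 2*k+1
        · subst hjl; rw [hgl]; simp only [Fin.val_mk]; omega
        · rw [hgm j (by omega) hjl]
          have := hf'r (j-1) (by omega)
          simp only [Fin.val_mk]; omega
      · by_cases hjl : j = 2*k+1
        · subst hjl; rw [hgl, hgm i hi0 (by omega)]
          have := hf'r (i-1) (by omega)
          omega
        · rw [hgm i hi0 (by omega), hgm j (by omega) hjl]
          exact hf'm (i-1) (j-1) (by omega) (by omega)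
    · intro i hik
      rw [show 2*(k+1)-1-i = 2*k+1-i from by omega]
      by_cases hi0 : i = 0
      · subst hi0
        rw [Nat.sub_zero, hg0, hgl]
        exact hxy
      · rw [hgm i hi0 (by omega), hgm (2*k+1-i) (by omega) (by omega)]
        have heq : 2*k+1-i-1 = 2*k-1-(i-1) := by omega
        rw [heq]
        exact hf'c (i-1) (by omega)

open Fin.CommRing in
lemma partA (a b : ℕ) (ha : 4 ≤ a) (h4 : 4 ∣ a) (hb : 3 ≤ b) (c : Fin b)
    (χ : Fin (a*b) → Fin (a*b) → Fin 2) (hsym : ∀ u v, χ u v = χ v u) :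
    ContainsCyc (nestedMatching a) χ 0 ∨ ContainsCyc (starG b c) χ 1 := by
  haveI : NeZero b := ⟨by omega⟩
  haveI : NeZero a := ⟨by omega⟩
  have hN : 0 < a*b := by positivity
  by_cases hstar : ∃ x : Fin (a*b), b - 1 ≤ (univ.filter fun v => v ≠ x ∧ χ x v = 1).card
  · right
    obtain ⟨x, hx⟩ := hstar
    obtain ⟨T, hTsub, hTcard⟩ := Finset.exists_subset_card_eq hx
    have hxT : x ∉ T := by
      intro h
      have := hTsub h
      simp only [mem_filter] at this
      exact this.2.1 rfl
    have hT'card : (insert x T).card = b := by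
      rw [Finset.card_insert_of_notMem hxT, hTcard]; omega
    set ψ : Fin b → Fin (a*b) := fun i => (((insert x T).orderIsoOfFin hT'card i : Fin (a*b))) with hψ
    have hψm : StrictMono ψ :=
      fun i j hij => Subtype.coe_lt_coe.mpr (((insert x T).orderIsoOfFin hT'card).strictMono hij)
    have hψmem : ∀ i, ψ i ∈ insert x T := fun i => (((insert x T).orderIsoOfFin hT'card) i).2
    obtain ⟨p, hp⟩ : ∃ p, ψ p = x :=
      ⟨((insert x T).orderIsoOfFin hT'card).symm ⟨x, Finset.mem_insert_self x T⟩,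
        congrArg Subtype.val (((insert x T).orderIsoOfFin hT'card).apply_symm_apply ⟨x, Finset.mem_insert_self x T⟩)⟩
    refine ⟨fun i => ψ (i + (p - c)), ⟨c - p, ?_⟩, ?_⟩
    · have heq : (fun i : Fin b => ψ (i + (c - p) + (p - c))) = ψ := by
        funext i; congr 1; ring
      rw [heq]; exact hψm
    · intro u v huv
      rw [starG, SimpleGraph.fromRel_adj] at huv
      obtain ⟨huv1, huv2⟩ := huv
      have key : ∀ w : Fin b, w ≠ c → χ x (ψ (w + (p - c))) = 1 := by
        intro w hw
        have hne : ψ (w + (p - c)) ≠ x := by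
          rw [← hp]
          intro h
          have := hψm.injective h
          apply hw
          have : w + (p - c) = c + (p - c) := by rw [this]; ring
          exact add_right_cancel this
        have hmem := hψmem (w + (p - c))
        rw [Finset.mem_insert] at hmem
        rcases hmem with h | h
        · exact absurd h hne
        · have := hTsub h
          simp only [mem_filter] at this
          exact this.2.2
      have hcp : c + (p - c) = p := by ring
      rcases huv2 with h | h
      · show χ (ψ (u + (p - c))) (ψ (v + (p - c))) = 1
        rw [h, hcp, hp]
        exact key v (fun hv => huv1 (h.trans hv.symm))
      · show χ (ψ (u + (p - c))) (ψ (v + (p - c))) = 1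
        rw [h, hcp, hp, hsym]
        exact key u (fun hu => huv1 (hu.trans h.symm))
  · left
    push_neg at hstar
    have hdeg : ∀ x : Fin (a*b), (univ.filter fun v => v ≠ x ∧ χ x v = 1).card ≤ b - 2 := by
      intro x; have := hstar x; omega
    obtain ⟨f, hr, hm, hc⟩ := greedy (a*b) b hb hN χ hdeg (a/2) 0 (a*b-1)
      (by omega)
      (by
        have h1 : a/2 * b ≤ a * b := Nat.mul_le_mul_right b (Nat.div_le_self a 2)
        omega)
    have ha2 : 2*(a/2) = a := by omega
    refine ⟨fun i => f i.val, ⟨0, ?_⟩, ?_⟩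
    · intro i j hij
      simp only [add_zero]
      rw [Fin.lt_def]
      exact hm i.val j.val hij (by omega)
    · intro u v huv
      rw [nestedMatching, SimpleGraph.fromRel_adj] at huv
      obtain ⟨huv1, huv2⟩ := huv
      have hsum : u.val + v.val = a - 1 := by omega
      have hne : u.val ≠ v.val := fun h => huv1 (Fin.ext h)
      show χ (f u.val) (f v.val) = 0
      rcases Nat.lt_or_ge u.val v.val with hlt | hge
      · have hu2 : u.val < a/2 := by omega
        have hv2 : v.val = 2*(a/2) - 1 - u.val := by omega
        rw [hv2]
        exact hc u.val hu2
      · have hlt : v.val < u.val := by omega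
        have hv2 : v.val < a/2 := by omega
        have hu2 : u.val = 2*(a/2) - 1 - v.val := by omega
        rw [hsym, hu2]
        exact hc v.val hv2

lemma fin_neg_val (N : ℕ) [NeZero N] (z : Fin N) (h : z ≠ 0) : (-z).val = N - z.val := by
  rw [Fin.neg_def]
  simp only [Fin.val_mk]
  have h1 : z.val < N := z.isLt
  have h2 : 1 ≤ z.val := by
    rcases Nat.eq_zero_or_pos z.val with h0 | h0
    · exact absurd (Fin.ext (by simpa using h0)) h
    · exact h0
  rw [Nat.mod_eq_of_lt (by omega)]

open Fin.CommRing in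
lemma fin_sub_val_lt (N : ℕ) [NeZero N] (x y : Fin N) (h : x < y) :
    (x - y).val = N - (y.val - x.val) := by
  have hne : y - x ≠ 0 := sub_ne_zero_of_ne h.ne'
  have h1 : (y - x).val = y.val - x.val := Fin.sub_val_of_le h.le
  have h2 : x - y = -(y - x) := by ring
  rw [h2, fin_neg_val _ _ hne, h1]

open Fin.CommRing in
lemma partB_star (N b d : ℕ) [NeZero N] (hb : b = 2*d+3) (c : Fin b)
    (χ : Fin N → Fin N → Fin 2)
    (hχ : ∀ u v : Fin N, χ u v = 1 → (v - u).val ≤ d ∨ (u - v).val ≤ d) :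
    ¬ ContainsCyc (starG b c) χ 1 := by
  rintro ⟨φ, ⟨t, hmono⟩, hcol⟩
  haveI : NeZero b := ⟨by omega⟩
  have hinj : Function.Injective φ := by
    intro u v h
    have h1 : (fun i : Fin b => φ (i + t)) (u - t) = (fun i : Fin b => φ (i + t)) (v - t) := by
      simp only [sub_add_cancel]; exact h
    have h2 := hmono.injective h1
    have h3 : u - t + t = v - t + t := by rw [h2]
    simpa [sub_add_cancel] using h3
  set x := φ c with hx
  set A : Finset (Fin N) := ((Finset.Icc 1 d).image fun k : ℕ => x + (k : Fin N)) ∪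
      ((Finset.Icc 1 d).image fun k : ℕ => x - (k : Fin N)) with hA
  have hsub : (univ.erase c).image φ ⊆ A := by
    intro w hw
    rw [Finset.mem_image] at hw
    obtain ⟨v, hv, hwv⟩ := hw
    rw [Finset.mem_erase] at hv
    have hvc : v ≠ c := hv.1
    have hadj : (starG b c).Adj c v := by
      rw [starG, SimpleGraph.fromRel_adj]
      exact ⟨fun h => hvc h.symm, Or.inl rfl⟩
    have h1 := hχ _ _ (hcol c v hadj)
    have hne : φ v ≠ x := fun h => hvc (hinj h)
    subst hwv
    rw [hA, Finset.mem_union]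
    rcases h1 with h | h
    · left
      rw [Finset.mem_image]
      refine ⟨(φ v - x).val, ?_, ?_⟩
      · rw [Finset.mem_Icc]
        refine ⟨?_, h⟩
        have hz : φ v - x ≠ 0 := sub_ne_zero_of_ne hne
        rcases Nat.eq_zero_or_pos (φ v - x).val with h0 | h0
        · exact absurd (Fin.ext (by simpa using h0)) hz
        · exact h0
      · rw [Fin.cast_val_eq_self]; ring
    · right
      rw [Finset.mem_image]
      refine ⟨(x - φ v).val, ?_, ?_⟩
      · rw [Finset.mem_Icc]
        refine ⟨?_, h⟩
        have hz : x - φ v ≠ 0 := sub_ne_zero_of_ne (Ne.symm hne)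
        rcases Nat.eq_zero_or_pos (x - φ v).val with h0 | h0
        · exact absurd (Fin.ext (by simpa using h0)) hz
        · exact h0
      · rw [Fin.cast_val_eq_self]; ring
  have hcard1 : ((univ.erase c).image φ).card = b - 1 := by
    rw [Finset.card_image_of_injective _ hinj, Finset.card_erase_of_mem (mem_univ c),
      Finset.card_univ, Fintype.card_fin]
  have hcard2 : A.card ≤ 2*d := by
    have h1 := Finset.card_union_le ((Finset.Icc 1 d).image fun k : ℕ => x + (k : Fin N))
      ((Finset.Icc 1 d).image fun k : ℕ => x - (k : Fin N))
    have h2 := Finset.card_image_le (s := Finset.Icc 1 d) (f := fun k : ℕ => x + (k : Fin N))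
    have h3 := Finset.card_image_le (s := Finset.Icc 1 d) (f := fun k : ℕ => x - (k : Fin N))
    rw [Nat.card_Icc] at h2 h3
    rw [hA]
    omega
  have hle := Finset.card_le_card hsub
  omega

open Fin.CommRing in
lemma partB_match (N a d : ℕ) [NeZero N] (ha : 4 ≤ a) (h4 : 4 ∣ a) (hN : N = a + 2*d - 1)
    (χ : Fin N → Fin N → Fin 2)
    (hχ : ∀ u v : Fin N, χ u v = 0 → ¬((v - u).val ≤ d ∨ (u - v).val ≤ d)) :
    ¬ ContainsCyc (nestedMatching a) χ 0 := by
  rintro ⟨φ, ⟨t, hmono⟩, hcol⟩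
  haveI : NeZero a := ⟨by omega⟩
  have hone : ((1 : Fin a)).val = 1 := by rw [Fin.val_one', Nat.mod_eq_of_lt (by omega)]
  set ψ : Fin a → Fin N := fun i => φ (i + t) with hψ
  have hφψ : ∀ w : Fin a, φ w = ψ (w - t) := by
    intro w; rw [hψ]; simp only [sub_add_cancel]
  have hchain : ∀ (k : ℕ) (p q : Fin a), q.val = p.val + k → (ψ p).val + k ≤ (ψ q).val := by
    intro k
    induction k with
    | zero =>
      intro p q h
      have e : p = q := Fin.ext (by omega)
      rw [e]; omega
    | succ k ih =>
      intro p q h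
      have hq' : p.val + k < a := by have := q.isLt; omega
      have h1 := ih p ⟨p.val + k, hq'⟩ rfl
      have h2 : (ψ ⟨p.val + k, hq'⟩).val < (ψ q).val := by
        have hlt : (⟨p.val + k, hq'⟩ : Fin a) < q := by rw [Fin.lt_def]; simp only [Fin.val_mk]; omega
        exact hmono hlt
      omega
  have hsucc : ∀ j : Fin a, j.val < a - 1 → (j + 1 : Fin a).val = j.val + 1 := by
    intro j hj; rw [Fin.val_add, hone, Nat.mod_eq_of_lt (by omega)]
  have hwrap : ∀ j : Fin a, j.val = a - 1 → (j + 1 : Fin a) = 0 := by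
    intro j hj
    apply Fin.ext
    rw [Fin.val_add, hone, hj, show a - 1 + 1 = a from by omega, Nat.mod_self]
    simp
  have hgapI : ∀ j : Fin a, j.val < a - 1 → χ (ψ j) (ψ (j+1)) = 0 → (ψ j).val + (d+1) ≤ (ψ (j+1)).val := by
    intro j hj hG
    have hlt : j < j + 1 := by rw [Fin.lt_def, hsucc j hj]; omega
    have hltψ : ψ j < ψ (j+1) := hmono hlt
    have h1 := hχ _ _ hG
    push_neg at h1
    have h2 : (ψ (j+1) - ψ j).val = (ψ (j+1)).val - (ψ j).val := Fin.sub_val_of_le hltψ.le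
    have h3 := h1.1
    rw [h2] at h3
    have h4 : (ψ j).val < (ψ (j+1)).val := hltψ
    omega
  -- the two adjacent edges
  have hu1lt : a/2 - 1 < a := by omega
  have hv1lt : a/2 < a := by omega
  have hu2lt : a - 1 < a := by omega
  have h0lt : 0 < a := by omega
  set u1 : Fin a := ⟨a/2 - 1, hu1lt⟩ with hu1
  set v1 : Fin a := ⟨a/2, hv1lt⟩ with hv1
  set u2 : Fin a := ⟨a - 1, hu2lt⟩ with hu2
  set v2 : Fin a := ⟨0, h0lt⟩ with hv2
  have hadj1 : (nestedMatching a).Adj u1 v1 := by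
    rw [nestedMatching, SimpleGraph.fromRel_adj]
    refine ⟨Fin.ne_of_val_ne ?_, Or.inl ?_⟩ <;> simp only [hu1, hv1, Fin.val_mk] <;> omega
  have hadj2 : (nestedMatching a).Adj u2 v2 := by
    rw [nestedMatching, SimpleGraph.fromRel_adj]
    refine ⟨Fin.ne_of_val_ne ?_, Or.inl ?_⟩ <;> simp only [hu2, hv2, Fin.val_mk] <;> omega
  have hv1u1 : v1 = u1 + 1 := by
    apply Fin.ext
    rw [Fin.val_add, hone]
    simp only [hu1, hv1, Fin.val_mk]
    rw [Nat.mod_eq_of_lt (by omega)]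
    omega
  have hv2u2 : v2 = u2 + 1 := by
    rw [hwrap u2 rfl]
    apply Fin.ext
    simp [hv2]
  have he1 : χ (ψ (u1 - t)) (ψ ((u1 - t) + 1)) = 0 := by
    have h := hcol u1 v1 hadj1
    rw [hφψ u1, hφψ v1] at h
    have e : v1 - t = (u1 - t) + 1 := by rw [hv1u1]; ring
    rw [e] at h; exact h
  have he2 : χ (ψ (u2 - t)) (ψ ((u2 - t) + 1)) = 0 := by
    have h := hcol u2 v2 hadj2
    rw [hφψ u2, hφψ v2] at h
    have e : v2 - t = (u2 - t) + 1 := by rw [hv2u2]; ring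
    rw [e] at h; exact h
  have hd12 : (u2 - u1).val = a/2 := by
    rw [Fin.sub_val_of_le (by rw [Fin.le_def]; simp only [hu1, hu2, Fin.val_mk]; omega)]
    simp only [hu1, hu2, Fin.val_mk]
    omega
  have hj2val : (u2 - t).val = ((u1 - t).val + a/2) % a := by
    have e : u2 - t = (u1 - t) + (u2 - u1) := by ring
    rw [e, Fin.val_add, hd12]
  obtain ⟨p, q, hpq, hbp, hbq⟩ : ∃ p q : Fin a, q.val = p.val + a/2 ∧
      χ (ψ p) (ψ (p+1)) = 0 ∧ χ (ψ q) (ψ (q+1)) = 0 := by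
    rcases Nat.lt_or_ge ((u1 - t).val + a/2) a with hc1 | hc1
    · refine ⟨u1 - t, u2 - t, ?_, he1, he2⟩
      rw [hj2val, Nat.mod_eq_of_lt hc1]
    · refine ⟨u2 - t, u1 - t, ?_, he2, he1⟩
      rw [hj2val, Nat.mod_eq_sub_mod hc1, Nat.mod_eq_of_lt (by have := (u1 - t).isLt; omega)]
      have := (u1 - t).isLt
      omega
  have hp1 : p.val < a - 1 := by have := q.isLt; omega
  have hA := hgapI p hp1 hbp
  have hchain1 := hchain (q.val - (p.val+1)) (p+1) q (by rw [hsucc p hp1]; omega)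
  have hP := hchain p.val 0 p (by simp)
  have hz00 : 0 ≤ (ψ (0 : Fin a)).val := Nat.zero_le _
  rcases Nat.lt_or_ge q.val (a-1) with hq1 | hq1
  · have hB := hgapI q hq1 hbq
    have hchain2 := hchain (a - 1 - (q.val+1)) (q+1) ⟨a-1, hu2lt⟩
      (by rw [hsucc q hq1]; simp only [Fin.val_mk]; omega)
    have hlast : (ψ (⟨a-1, hu2lt⟩ : Fin a)).val ≤ N - 1 := by
      have := (ψ (⟨a-1, hu2lt⟩ : Fin a)).isLt
      omega
    omega
  · have hqlast : q.val = a - 1 := by have := q.isLt; omega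
    have hq0 : (q + 1 : Fin a) = 0 := hwrap q hqlast
    have h1 := hχ _ _ hbq
    push_neg at h1
    have h2 := h1.1
    rw [hq0] at h2
    have hlt0 : (0 : Fin a) < q := by rw [Fin.lt_def]; simp only [Fin.val_zero]; omega
    have hψlt : ψ 0 < ψ q := hmono hlt0
    have h3 : (ψ 0 - ψ q).val = N - ((ψ q).val - (ψ (0:Fin a)).val) := fin_sub_val_lt _ _ _ hψlt
    rw [h3] at h2
    have hzq : (ψ q).val ≤ N - 1 := by have := (ψ q).isLt; omega
    have hzlt : (ψ (0:Fin a)).val < (ψ q).val := hψlt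
    omega

theorem stmt16 (a b : ℕ) (ha : 4 ≤ a) (h4 : 4 ∣ a) (hb : 3 ≤ b) (hob : Odd b)
    (c : Fin b) :
    a + b - 3 ≤ Rcyc2 (nestedMatching a) (starG b c) := by
  obtain ⟨d, hd⟩ : ∃ d, b = 2*d+3 := ⟨(b-3)/2, by obtain ⟨m, hm⟩ := hob; omega⟩
  rw [Rcyc2]
  apply le_csInf
  · exact ⟨a*b, fun χ hsym => partA a b ha h4 hb c χ hsym⟩
  · intro n hn
    by_contra hcon
    push_neg at hcon
    haveI : NeZero (a+b-4) := ⟨by omega⟩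
    set χN : Fin (a+b-4) → Fin (a+b-4) → Fin 2 :=
      fun u v => if (v-u).val ≤ d ∨ (u-v).val ≤ d then 1 else 0 with hχN
    have hle : n ≤ a+b-4 := by omega
    have hcond0 : ∀ u v : Fin (a+b-4), χN u v = 0 → ¬((v - u).val ≤ d ∨ (u - v).val ≤ d) := by
      intro u v h hcnd
      rw [hχN] at h
      simp only [if_pos hcnd] at h
      exact one_ne_zero h
    have hcond1 : ∀ u v : Fin (a+b-4), χN u v = 1 → (v - u).val ≤ d ∨ (u - v).val ≤ d := by
      intro u v h
      by_contra hcnd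
      rw [hχN] at h
      simp only [if_neg hcnd] at h
      exact zero_ne_one h
    have hsymN : ∀ u v : Fin (a+b-4), χN u v = χN v u := by
      intro u v
      rw [hχN]
      simp only
      exact if_congr or_comm rfl rfl
    have hn' := hn (fun u v => χN (Fin.castLE hle u) (Fin.castLE hle v))
      (fun u v => hsymN _ _)
    rcases hn' with h | h
    · obtain ⟨φ, ⟨t, hm⟩, hc⟩ := h
      have hcontain : ContainsCyc (nestedMatching a) χN 0 :=
        ⟨fun i => Fin.castLE hle (φ i), ⟨t, (Fin.strictMono_castLE hle).comp hm⟩,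
          fun u v huv => hc u v huv⟩
      exact partB_match (a+b-4) a d ha h4 (by omega) χN hcond0 hcontain
    · obtain ⟨φ, ⟨t, hm⟩, hc⟩ := h
      have hcontain : ContainsCyc (starG b c) χN 1 :=
        ⟨fun i => Fin.castLE hle (φ i), ⟨t, (Fin.strictMono_castLE hle).comp hm⟩,
          fun u v huv => hc u v huv⟩
      exact partB_star (a+b-4) b d hd c χN hcond1 hcontain
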